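/- Let Y be a real vector space, D ⊂ Y a convex cone, and H ⊂ D\(−D) a D-convex set with 0 ∉ vcl(H + D). If ξ_H(y₁) < 0 and ξ_H(y₂) < 0, then ξ_H(y₁ + y₂) ≤ ξ_H(y₁) + ξ_H(y₂). -/

import Mathlib

open Filter Topology Pointwise

/-- Vector closure of a set. -/
def vcl {Y : Type*} [AddCommGroup Y] [Module ℝ Y] (A : Set Y) : Set Y :=
  {y | ∃ v : Y, ∃ l : ℕ → ℝ, (∀ n, 0 ≤ l n) ∧ Tendsto l atTop (nhds 0) ∧
    ∀ n, y + l n • v ∈ A}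

/-- Generalized Gerstewitz function generated by `D` and `H`. -/
noncomputable def xiH {Y : Type*} [AddCommGroup Y] [Module ℝ Y] (D H : Set Y) (y : Y) : EReal :=
  sInf ((fun t : ℝ => (t : EReal)) '' {t : ℝ | y ∈ t • H - D})

/-- The sublevel sets are upward closed. -/
lemma xiH_mem_up {Y : Type*} [AddCommGroup Y] [Module ℝ Y] (D H : Set Y)
    (hDadd : ∀ a ∈ D, ∀ b ∈ D, a + b ∈ D)
    (hDsmul : ∀ α : ℝ, 0 ≤ α → ∀ d ∈ D, α • d ∈ D)
    (hH : H ⊆ D) {y : Y} {t t' : ℝ} (ht : y ∈ t • H - D) (htt' : t ≤ t') :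
    y ∈ t' • H - D := by
  rcases Set.mem_sub.mp ht with ⟨a, ha, d, hd, rfl⟩
  rcases Set.mem_smul_set.mp ha with ⟨h, hh, rfl⟩
  refine Set.mem_sub.mpr ⟨t' • h, Set.smul_mem_smul_set hh, (t' - t) • h + d,
    hDadd _ (hDsmul _ (by linarith) h (hH hh)) _ hd, by module⟩

lemma xiH_exists_ab {x₁ x₂ : EReal} (h1 : x₁ < 0) (h2 : x₂ < 0) {r : ℝ}
    (hr : x₁ + x₂ < (r : EReal)) :
    ∃ a b : ℝ, a < 0 ∧ b < 0 ∧ x₁ < (a : EReal) ∧ x₂ < (b : EReal) ∧ a + b ≤ r := by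
  induction x₁ using EReal.rec with
  | top => exact absurd h1 (by simp)
  | bot =>
    induction x₂ using EReal.rec with
    | top => exact absurd h2 (by simp)
    | bot =>
      refine ⟨min (r / 2) 0 - 1, min (r / 2) 0 - 1, ?_, ?_, EReal.bot_lt_coe _,
        EReal.bot_lt_coe _, ?_⟩
      · have := min_le_right (r / 2) (0 : ℝ); linarith
      · have := min_le_right (r / 2) (0 : ℝ); linarith
      · have := min_le_left (r / 2) (0 : ℝ); linarith
    | coe q =>
      have hq : q < 0 := by exact_mod_cast h2
      refine ⟨min (r - q / 2) 0 - 1, q / 2, ?_, by linarith, EReal.bot_lt_coe _,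
        by exact_mod_cast (by linarith : q < q / 2), ?_⟩
      · have := min_le_right (r - q / 2) (0 : ℝ); linarith
      · have := min_le_left (r - q / 2) (0 : ℝ); linarith
  | coe p =>
    have hp : p < 0 := by exact_mod_cast h1
    induction x₂ using EReal.rec with
    | top => exact absurd h2 (by simp)
    | bot =>
      refine ⟨p / 2, min (r - p / 2) 0 - 1, by linarith, ?_,
        by exact_mod_cast (by linarith : p < p / 2), EReal.bot_lt_coe _, ?_⟩
      · have := min_le_right (r - p / 2) (0 : ℝ); linarith
      · have := min_le_left (r - p / 2) (0 : ℝ); linarith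
    | coe q =>
      have hq : q < 0 := by exact_mod_cast h2
      have hpq : p + q < r := by exact_mod_cast hr
      set ε : ℝ := min (min (-p) (-q)) (r - p - q) / 2 with hε
      have hε1 : ε ≤ (-p) / 2 := by
        have h := min_le_left (-p) (-q)
        have h' := min_le_left (min (-p) (-q)) (r - p - q)
        rw [hε]; linarith
      have hε2 : ε ≤ (-q) / 2 := by
        have h := min_le_right (-p) (-q)
        have h' := min_le_left (min (-p) (-q)) (r - p - q)
        rw [hε]; linarith
      have hε3 : 2 * ε ≤ r - p - q := by
        have h' := min_le_right (min (-p) (-q)) (r - p - q)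
        rw [hε]; linarith
      have hε0 : 0 < ε := by
        have : 0 < min (min (-p) (-q)) (r - p - q) := by
          refine lt_min (lt_min (by linarith) (by linarith)) (by linarith)
        rw [hε]; linarith
      exact ⟨p + ε, q + ε, by linarith, by linarith,
        by exact_mod_cast (by linarith : p < p + ε),
        by exact_mod_cast (by linarith : q < q + ε), by linarith⟩

theorem xiH_subadditive_of_neg {Y : Type*} [AddCommGroup Y] [Module ℝ Y] (D H : Set Y)
    (hDadd : ∀ a ∈ D, ∀ b ∈ D, a + b ∈ D)
    (hDsmul : ∀ α : ℝ, 0 ≤ α → ∀ d ∈ D, α • d ∈ D)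
    (hH : H ⊆ D \ (-D)) (hconv : Convex ℝ (H + D))
    (h0 : (0 : Y) ∉ vcl (H + D)) :
    ∀ y₁ y₂ : Y, xiH D H y₁ < 0 → xiH D H y₂ < 0 →
      xiH D H (y₁ + y₂) ≤ xiH D H y₁ + xiH D H y₂ := by
  have hHD : H ⊆ D := fun h hh => (hH hh).1
  intro y₁ y₂ h1 h2
  -- from `xiH y < a` with `a < 0` we get membership `y ∈ a • H - D`
  have key : ∀ (y : Y) (a : ℝ), xiH D H y < (a : EReal) → y ∈ a • H - D := by
    intro y a hy
    rcases sInf_lt_iff.mp hy with ⟨e, he, hlt⟩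
    rcases he with ⟨t, htS, rfl⟩
    exact xiH_mem_up D H hDadd hDsmul hHD htS (le_of_lt (by exact_mod_cast show ((t:ℝ):EReal) < (a:EReal) from hlt))
  refine le_of_forall_gt_imp_ge_of_dense fun c hc => ?_
  rcases EReal.lt_iff_exists_real_btwn.mp hc with ⟨r, hr1, hr2⟩
  refine le_trans ?_ hr2.le
  obtain ⟨a, b, ha0, hb0, hxa, hxb, hab⟩ := xiH_exists_ab h1 h2 hr1
  have hm1 := key y₁ a hxa
  have hm2 := key y₂ b hxb
  -- combine the two memberships
  rcases Set.mem_sub.mp hm1 with ⟨a₁, ha1, d₁, hd₁, hy₁⟩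
  rcases Set.mem_smul_set.mp ha1 with ⟨h₁, hh₁, rfl⟩
  rcases Set.mem_sub.mp hm2 with ⟨a₂, ha2, d₂, hd₂, hy₂⟩
  rcases Set.mem_smul_set.mp ha2 with ⟨h₂, hh₂, rfl⟩
  set t : ℝ := a + b with htdef
  have ht0 : t < 0 := by linarith
  have htne : t ≠ 0 := ne_of_lt ht0
  have h0D : (0 : Y) ∈ D := by
    have := hDsmul 0 le_rfl d₁ hd₁
    simpa using this
  have hmem1 : h₁ ∈ H + D := ⟨h₁, hh₁, 0, h0D, by simp⟩
  have hmem2 : h₂ ∈ H + D := ⟨h₂, hh₂, 0, h0D, by simp⟩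
  have hl0 : 0 ≤ a / t := by rw [div_nonneg_iff]; right; exact ⟨ha0.le, ht0.le⟩
  have hm0 : 0 ≤ b / t := by rw [div_nonneg_iff]; right; exact ⟨hb0.le, ht0.le⟩
  have hlm : a / t + b / t = 1 := by
    field_simp
    exact htdef.symm
  have hcmem : (a / t) • h₁ + (b / t) • h₂ ∈ H + D :=
    hconv hmem1 hmem2 hl0 hm0 hlm
  rcases hcmem with ⟨h, hh, d, hd, hhd⟩
  have hta : t * (a / t) = a := by field_simp
  have htb : t * (b / t) = b := by field_simp
  have hd' : (-t) • d + (d₁ + d₂) ∈ D :=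
    hDadd _ (hDsmul _ (by linarith) d hd) _ (hDadd _ hd₁ _ hd₂)
  have heq : t • h - ((-t) • d + (d₁ + d₂)) = y₁ + y₂ := by
    have hh' : h = (a / t) • h₁ + (b / t) • h₂ - d := eq_sub_of_add_eq hhd
    rw [hh', ← hy₁, ← hy₂]
    rw [smul_sub, smul_add, smul_smul, smul_smul, hta, htb]
    module
  have hmem : y₁ + y₂ ∈ t • H - D :=
    Set.mem_sub.mpr ⟨t • h, Set.smul_mem_smul_set hh, _, hd', heq⟩
  have : xiH D H (y₁ + y₂) ≤ ((t : ℝ) : EReal) :=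
    sInf_le ⟨t, hmem, rfl⟩
  exact le_trans this (by exact_mod_cast hab)
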